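/- arXiv:1808.08736 — 2 statements merged into one kernel-verified Lean document; each statement's English description precedes it below -/
import Mathlib

section
/- Let ν ∈ (0,1], k ≥ 1 a real number, λ ∈ ℝ, and 0 < ε ≤ 1. Set L = (k/ν)^{1/3} and d = −1−λ−ikν ∈ ℂ. Then there exists an absolute constant c > 0 (independent of ν, k, λ, ε, x) such that for every x ≥ 0: ∫_0^{Lx} (1 + |t + Ld + iε|^{1/2}) dt ≥ c·( Lx·|Ld|^{1/2} + (Lx)^{3/2} ), where |·| denotes the modulus of a complex number. -/
open MeasureTheory Set

private lemma sqrt_subadd (x y : ℝ) (hx : 0 ≤ x) (hy : 0 ≤ y) :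
    Real.sqrt (x + y) ≤ Real.sqrt x + Real.sqrt y := by
  rw [← Real.sqrt_sq (by positivity : (0:ℝ) ≤ Real.sqrt x + Real.sqrt y)]
  apply Real.sqrt_le_sqrt
  nlinarith [Real.sq_sqrt hx, Real.sq_sqrt hy, Real.sqrt_nonneg x, Real.sqrt_nonneg y]

private lemma cont_integrand (z : ℂ) :
    Continuous fun t : ℝ => 1 + Real.sqrt (‖(t : ℂ) + z‖) := by
  apply continuous_const.add
  exact Real.continuous_sqrt.comp (continuous_norm.comp (by continuity))

/-- Lower bound of the integral by a constant on a subinterval. -/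
private lemma intLB (z : ℂ) (a u v C : ℝ) (h0u : 0 ≤ u) (huv : u ≤ v) (hva : v ≤ a)
    (hC0 : 0 ≤ C)
    (hC : ∀ t ∈ Ioc u v, C ≤ 1 + Real.sqrt (‖(t : ℂ) + z‖)) :
    C * (v - u) ≤ ∫ t in Ioc (0:ℝ) a, (1 + Real.sqrt (‖(t : ℂ) + z‖)) := by
  have hint : IntegrableOn (fun t : ℝ => 1 + Real.sqrt (‖(t : ℂ) + z‖))
      (Ioc (0:ℝ) a) := (cont_integrand z).integrableOn_Ioc
  have hint2 : IntegrableOn (fun t : ℝ => 1 + Real.sqrt (‖(t : ℂ) + z‖))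
      (Ioc u v) := (cont_integrand z).integrableOn_Ioc
  have h1 : C * (v - u) ≤ ∫ t in Ioc u v, (1 + Real.sqrt (‖(t : ℂ) + z‖)) := by
    have := setIntegral_ge_of_const_le_real (μ := volume) measurableSet_Ioc
      (by simp [Real.volume_Ioc] : volume (Ioc u v) ≠ ⊤) hC hint2
    rwa [measureReal_def, Real.volume_Ioc, ENNReal.toReal_ofReal (by linarith)] at this
  refine h1.trans (setIntegral_mono_set hint ?_ ?_)
  · filter_upwards with t
    positivity
  · exact HasSubset.Subset.eventuallyLE (Ioc_subset_Ioc h0u hva)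

private lemma helper (w : ℂ) (ε : ℝ) (hε : 0 < ε) (hε1 : ε ≤ 1) (a : ℝ) (ha : 0 ≤ a) :
    (1/25 : ℝ) * (a * ‖w‖ ^ ((1:ℝ)/2) + a ^ ((3:ℝ)/2))
      ≤ ∫ t in Ioc (0:ℝ) a,
          (1 + ‖(t : ℂ) + w + Complex.I * (ε : ℂ)‖ ^ ((1:ℝ)/2)) := by
  set z : ℂ := w + Complex.I * (ε : ℂ) with hz
  have hrw : ∀ t : ℝ, (t : ℂ) + w + Complex.I * (ε : ℂ) = (t : ℂ) + z := by
    intro t; rw [hz]; ring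
  simp only [hrw, ← Real.sqrt_eq_rpow]
  rcases eq_or_lt_of_le ha with h0 | ha'
  · rw [← h0]
    simp [Real.zero_rpow (by norm_num : ((3:ℝ)/2) ≠ 0)]
  set I := ∫ t in Ioc (0:ℝ) a, (1 + Real.sqrt (‖(t : ℂ) + z‖)) with hI
  -- bound 1 : a * (1 + √|z.im|) ≤ I
  have h1 : a * (1 + Real.sqrt |z.im|) ≤ I := by
    have := intLB z a 0 a (1 + Real.sqrt |z.im|) le_rfl ha le_rfl (by positivity) ?_
    · linarith [this]
    · intro t ht
      have him : |z.im| = |((t : ℂ) + z).im| := by simp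
      have : Real.sqrt |z.im| ≤ Real.sqrt (‖(t:ℂ) + z‖) := by
        rw [him]
        exact Real.sqrt_le_sqrt (Complex.abs_im_le_norm _)
      linarith
  have hInn : 0 ≤ I := le_trans (by positivity) h1
  -- bound 2 : a * √a / 8 ≤ I
  have h2 : a * Real.sqrt a / 8 ≤ I := by
    have key : ∀ u v : ℝ, 0 ≤ u → u ≤ v → v ≤ a → v - u = a/4 →
        (∀ t ∈ Ioc u v, a/4 ≤ |((t:ℂ) + z).re|) → a * Real.sqrt a / 8 ≤ I := by
      intro u v h0u huv hva hlen habs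
      have := intLB z a u v (Real.sqrt (a/4)) h0u huv hva (Real.sqrt_nonneg _) ?_
      · have hs : Real.sqrt (a/4) = Real.sqrt a / 2 := by
          rw [show a/4 = a * ((1:ℝ)/2)^2 by ring, Real.sqrt_mul ha,
            Real.sqrt_sq (by norm_num : (0:ℝ) ≤ (1:ℝ)/2)]
          ring
        rw [hlen, hs] at this
        linarith
      · intro t ht
        have h1' : a/4 ≤ ‖(t:ℂ) + z‖ :=
          le_trans (habs t ht) (Complex.abs_re_le_norm _)
        have := Real.sqrt_le_sqrt h1'
        linarith
    rcases le_or_gt (-z.re) (a/2) with hre | hre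
    · refine key (3*a/4) a (by linarith) (by linarith) le_rfl (by ring) ?_
      intro t ht
      have : a/4 ≤ ((t:ℂ) + z).re := by
        simp only [Complex.add_re, Complex.ofReal_re]
        have := ht.1
        linarith
      calc a/4 ≤ ((t:ℂ) + z).re := this
        _ ≤ |((t:ℂ) + z).re| := le_abs_self _
    · refine key 0 (a/4) le_rfl (by linarith) (by linarith) (by ring) ?_
      intro t ht
      have : ((t:ℂ) + z).re ≤ -(a/4) := by
        simp only [Complex.add_re, Complex.ofReal_re]
        have := ht.2
        linarith
      calc a/4 ≤ -((t:ℂ)+z).re := by linarith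
        _ ≤ |((t:ℂ) + z).re| := neg_le_abs _
  -- bound 3 : a * √|z.re| ≤ 16 I
  have h3 : a * Real.sqrt |z.re| ≤ 16 * I := by
    rcases le_or_gt (-z.re) (2*a) with hre | hre
    · -- |z.re| ≤ 2a  or  z.re ≥ 0; split again
      rcases le_or_gt 0 z.re with h0r | h0r
      · -- pointwise |t+z| ≥ z.re
        have := intLB z a 0 a (Real.sqrt |z.re|) le_rfl ha le_rfl (Real.sqrt_nonneg _) ?_
        · linarith
        · intro t ht
          have : |z.re| ≤ |((t:ℂ)+z).re| := by
            simp only [Complex.add_re, Complex.ofReal_re]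
            rw [abs_of_nonneg h0r, abs_of_nonneg (by linarith [ht.1])]
            linarith [ht.1]
          have := Real.sqrt_le_sqrt (this.trans (Complex.abs_re_le_norm _))
          linarith
      · -- 0 < -z.re ≤ 2a : use a^{3/2} bound
        have hle : Real.sqrt |z.re| ≤ 2 * Real.sqrt a := by
          have : |z.re| ≤ 4 * a := by rw [abs_of_neg h0r]; linarith
          calc Real.sqrt |z.re| ≤ Real.sqrt (4*a) := Real.sqrt_le_sqrt this
            _ = 2 * Real.sqrt a := by
                rw [show (4:ℝ)*a = 2^2*a by norm_num, Real.sqrt_mul (by positivity),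
                  Real.sqrt_sq (by norm_num : (0:ℝ) ≤ 2)]
        calc a * Real.sqrt |z.re| ≤ a * (2 * Real.sqrt a) := by
              have := mul_le_mul_of_nonneg_left hle ha; linarith
          _ = 2 * (a * Real.sqrt a) := by ring
          _ ≤ 16 * I := by linarith
    · -- -z.re > 2a : pointwise |t+z.re| ≥ -z.re - a ≥ -z.re/2
      have := intLB z a 0 a (Real.sqrt ((-z.re)/2)) le_rfl ha le_rfl (Real.sqrt_nonneg _) ?_
      · have hs : Real.sqrt |z.re| ≤ 2 * Real.sqrt ((-z.re)/2) := by
          have h4 : |z.re| ≤ 4 * ((-z.re)/2) := by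
            rw [abs_of_neg (by linarith)]; linarith
          calc Real.sqrt |z.re| ≤ Real.sqrt (4 * ((-z.re)/2)) := Real.sqrt_le_sqrt h4
            _ = 2 * Real.sqrt ((-z.re)/2) := by
                rw [show (4:ℝ)*((-z.re)/2) = 2^2*((-z.re)/2) by norm_num,
                  Real.sqrt_mul (by positivity), Real.sqrt_sq (by norm_num : (0:ℝ) ≤ 2)]
        have hIb : Real.sqrt ((-z.re)/2) * a ≤ I := by linarith [this]
        calc a * Real.sqrt |z.re| ≤ a * (2 * Real.sqrt ((-z.re)/2)) := by
              have := mul_le_mul_of_nonneg_left hs ha; linarith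
          _ = 2 * (Real.sqrt ((-z.re)/2) * a) := by ring
          _ ≤ 2 * I := by linarith
          _ ≤ 16 * I := by linarith
      · intro t ht
        have hr : (-z.re)/2 ≤ |((t:ℂ)+z).re| := by
          simp only [Complex.add_re, Complex.ofReal_re]
          rw [abs_of_neg (by linarith [ht.2] : t + z.re < 0)]
          linarith [ht.2]
        have := Real.sqrt_le_sqrt (hr.trans (Complex.abs_re_le_norm _))
        linarith
  -- bound 4 : √|w| ≤ √|z.re| + √|z.im| + 1
  have h4 : Real.sqrt (‖w‖) ≤ Real.sqrt |z.re| + Real.sqrt |z.im| + 1 := by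
    have hw : ‖w‖ ≤ ‖z‖ + ε := by
      have : w = z + (-(Complex.I * (ε:ℂ))) := by rw [hz]; ring
      calc ‖w‖ = ‖z + (-(Complex.I * (ε:ℂ)))‖ := by rw [← this]
        _ ≤ ‖z‖ + ‖-(Complex.I * (ε:ℂ))‖ := norm_add_le _ _
        _ = ‖z‖ + ε := by
            rw [norm_neg, norm_mul, Complex.norm_I, Complex.norm_real, Real.norm_eq_abs,
              abs_of_pos hε, one_mul]
    have habs : ‖z‖ ≤ |z.re| + |z.im| := Complex.norm_le_abs_re_add_abs_im z
    calc Real.sqrt (‖w‖) ≤ Real.sqrt (|z.re| + |z.im| + ε) :=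
          Real.sqrt_le_sqrt (by linarith)
      _ ≤ Real.sqrt (|z.re| + |z.im|) + Real.sqrt ε :=
          sqrt_subadd _ _ (by positivity) hε.le
      _ ≤ Real.sqrt |z.re| + Real.sqrt |z.im| + Real.sqrt ε := by
          linarith [sqrt_subadd |z.re| |z.im| (abs_nonneg _) (abs_nonneg _)]
      _ ≤ Real.sqrt |z.re| + Real.sqrt |z.im| + 1 := by
          have : Real.sqrt ε ≤ 1 := by
            rw [show (1:ℝ) = Real.sqrt 1 by simp]
            exact Real.sqrt_le_sqrt hε1
          linarith
  -- combine
  have hexp : a ^ ((3:ℝ)/2) = a * Real.sqrt a := by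
    rw [show (3:ℝ)/2 = 1 + 1/2 by norm_num, Real.rpow_add ha', Real.rpow_one,
      ← Real.sqrt_eq_rpow]
  have h4' : a * Real.sqrt (‖w‖)
      ≤ a * Real.sqrt |z.re| + a * Real.sqrt |z.im| + a := by
    have := mul_le_mul_of_nonneg_left h4 ha
    linarith
  rw [hexp]
  linarith

/-- Key Airy-related integral estimate (Lemma 8.5 of the paper). -/
theorem statement17 :
    ∃ c : ℝ, 0 < c ∧
      ∀ (ν k lam ε : ℝ) (L : ℝ) (d : ℂ),
        0 < ν → ν ≤ 1 → 1 ≤ k → 0 < ε → ε ≤ 1 →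
        L = (k / ν) ^ ((1:ℝ)/3) →
        d = -1 - (lam : ℂ) - Complex.I * (k : ℂ) * (ν : ℂ) →
        ∀ x : ℝ, 0 ≤ x →
          c * (L * x * ‖(L : ℂ) * d‖ ^ ((1:ℝ)/2) + (L * x) ^ ((3:ℝ)/2))
            ≤ ∫ t in Set.Ioc (0:ℝ) (L * x),
                (1 + ‖(t : ℂ) + (L : ℂ) * d + Complex.I * (ε : ℂ)‖ ^ ((1:ℝ)/2)) := by
  refine ⟨1/25, by norm_num, ?_⟩
  intro ν k lam ε L d hν hν1 hk hε hε1 hL hd x hx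
  have hL0 : 0 ≤ L := by
    rw [hL]; positivity
  exact helper ((L:ℂ) * d) ε hε hε1 (L * x) (mul_nonneg hL0 hx)
end

section
/- Let k ∈ ℤ with |k| ≥ 1, let w : [−1,1] → ℂ be continuous, and let φ : [−1,1] → ℂ be twice continuously differentiable with φ''(y) − k²φ(y) = w(y) on [−1,1] and φ(−1) = φ(1) = 0. Then there is a constant C > 0, independent of k, w, φ, such that: (i) ‖φ'‖_{L²}² + k²‖φ‖_{L²}² = ⟨−w, φ⟩ ≤ C|k|^{−1}‖w‖_{L¹}²; (ii) ‖φ'‖_{L∞} + |k|·‖φ‖_{L∞} ≤ C‖w‖_{L¹}; (iii) ‖φ'‖_{L∞} + |k|·‖φ‖_{L∞} ≤ C|k|^{−1/2}‖w‖_{L²}. -/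
open MeasureTheory Set

/-- The `L²` norm of a function on the interval `[-1,1]`. -/
noncomputable def nL2 (f : ℝ → ℂ) : ℝ :=
  (∫ y in Set.Icc (-1:ℝ) 1, ‖f y‖ ^ 2) ^ ((1:ℝ)/2)

/-- The `L¹` norm of a function on the interval `[-1,1]`. -/
noncomputable def nL1 (f : ℝ → ℂ) : ℝ :=
  ∫ y in Set.Icc (-1:ℝ) 1, ‖f y‖

/-- The `L^∞` norm of a function on the interval `[-1,1]`. -/
noncomputable def nLinf (f : ℝ → ℂ) : ℝ :=
  ⨆ y : ↥(Set.Icc (-1:ℝ) 1), ‖f (y : ℝ)‖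

/-- The `L²` pairing of two functions on the interval `[-1,1]`. -/
noncomputable def innI (f g : ℝ → ℂ) : ℂ :=
  ∫ y in Set.Icc (-1:ℝ) 1, f y * (starRingEnd ℂ) (g y)

lemma sq_rpow_half {x : ℝ} (hx : 0 ≤ x) : (x ^ ((1:ℝ)/2)) ^ 2 = x := by
  rw [← Real.rpow_natCast (x ^ ((1:ℝ)/2)) 2, ← Real.rpow_mul hx]
  norm_num

lemma cexp_hasDerivAt (c : ℂ) (y : ℝ) :
    HasDerivAt (fun t : ℝ => Complex.exp (c * t)) (c * Complex.exp (c * y)) y := by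
  have h1 : HasDerivAt (fun t : ℝ => c * (t:ℂ)) c y := by
    simpa using (Complex.ofRealCLM.hasDerivAt (x := y)).const_mul c
  simpa [mul_comm] using h1.cexp

lemma norm_cexp_real (x : ℝ) : ‖Complex.exp ((x:ℝ):ℂ)‖ = Real.exp x := by
  rw [Complex.norm_exp_ofReal]

/-- Elliptic estimates for the stream function in terms of the vorticity
(Lemma 9.3 of the paper). -/
theorem statement18 :
    ∃ C : ℝ, 0 < C ∧
      ∀ (k : ℤ) (w φ : ℝ → ℂ),
        1 ≤ |k| →
        ContinuousOn w (Set.Icc (-1:ℝ) 1) →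
        ContDiff ℝ 2 φ →
        (∀ y ∈ Set.Icc (-1:ℝ) 1, deriv (deriv φ) y - (k:ℂ)^2 * φ y = w y) →
        φ (-1) = 0 → φ 1 = 0 →
        (((nL2 (deriv φ))^2 + (k:ℝ)^2 * (nL2 φ)^2 : ℝ) : ℂ)
            = innI (fun y => -w y) φ
          ∧ (nL2 (deriv φ))^2 + (k:ℝ)^2 * (nL2 φ)^2 ≤ C * |(k:ℝ)|⁻¹ * (nL1 w)^2
          ∧ nLinf (deriv φ) + |(k:ℝ)| * nLinf φ ≤ C * nL1 w
          ∧ nLinf (deriv φ) + |(k:ℝ)| * nLinf φ ≤ C * |(k:ℝ)| ^ (-(1:ℝ)/2) * nL2 w := by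
  refine ⟨100, by norm_num, ?_⟩
  intro k w φ hk hw hφ hode hb0 hb1
  -- basic setup
  set m : ℝ := |(k:ℝ)| with hm_def
  have hm : (1:ℝ) ≤ m := by
    have : ((1:ℤ):ℝ) ≤ ((|k|:ℤ):ℝ) := by exact_mod_cast hk
    simpa [hm_def] using this
  have hm0 : (0:ℝ) < m := lt_of_lt_of_le one_pos hm
  have hm0' : m ≠ 0 := ne_of_gt hm0
  have hk2 : ((k:ℂ))^2 = ((m:ℝ):ℂ)^2 := by
    have h1 : (m:ℝ)^2 = ((k:ℝ))^2 := sq_abs _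
    have : (((m:ℝ))^2 : ℂ) = (((k:ℝ))^2 : ℂ) := by exact_mod_cast congrArg (fun x : ℝ => (x:ℂ)) h1
    push_cast at this ⊢
    exact this.symm
  -- differentiability
  have hreg : Differentiable ℝ (deriv φ) ∧ Continuous (deriv (deriv φ)) ∧ Differentiable ℝ φ := by
    have h : ContDiff ℝ ((1:ℕ∞)+1) φ := by norm_num; exact hφ
    rw [contDiff_succ_iff_deriv] at h
    have h' : ContDiff ℝ ((0:ℕ∞)+1) (deriv φ) := by norm_num; exact h.2.2
    rw [contDiff_succ_iff_deriv] at h'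
    exact ⟨h'.1, h'.2.2.continuous, h.1⟩
  obtain ⟨hφd, hφdd, hφ1⟩ := hreg
  have hφc : Continuous φ := hφ1.continuous
  have hφdc : Continuous (deriv φ) := hφd.continuous
  set g : ℝ → ℂ := fun y => deriv (deriv φ) y - (k:ℂ)^2 * φ y with hg_def
  have hgc : Continuous g := hφdd.sub (continuous_const.mul hφc)
  have hgw : ∀ y ∈ Icc (-1:ℝ) 1, g y = w y := hode
  -- norm quantities
  have hN1g : ∫ y in Icc (-1:ℝ) 1, ‖g y‖ = nL1 w := by
    refine setIntegral_congr_fun measurableSet_Icc fun y hy => ?_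
    rw [hgw y hy]
  have hN1nonneg : 0 ≤ nL1 w := by
    rw [← hN1g]; exact setIntegral_nonneg measurableSet_Icc fun y _ => norm_nonneg _
  have hN2sq : ∫ y in Icc (-1:ℝ) 1, ‖g y‖^2 = ∫ y in Icc (-1:ℝ) 1, ‖w y‖^2 := by
    refine setIntegral_congr_fun measurableSet_Icc fun y hy => ?_
    rw [hgw y hy]
  have hN2sqnonneg : 0 ≤ ∫ y in Icc (-1:ℝ) 1, ‖w y‖^2 :=
    setIntegral_nonneg measurableSet_Icc fun y _ => sq_nonneg _
  have hN2nonneg : 0 ≤ nL2 w := Real.rpow_nonneg hN2sqnonneg _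
  -- the kernel-weighted integral
  set K : ℝ → ℝ := fun y => ∫ s in Icc (-1:ℝ) 1, Real.exp (-(m * |y - s|)) * ‖g s‖ with hK_def
  have hkerc : ∀ y : ℝ, Continuous (fun s => Real.exp (-(m * |y - s|))) := fun y =>
    Real.continuous_exp.comp ((continuous_const.mul ((continuous_const.sub continuous_id).abs)).neg)
  have hKint : ∀ y : ℝ, IntegrableOn (fun s => Real.exp (-(m * |y - s|)) * ‖g s‖) (Icc (-1:ℝ) 1) :=
    fun y => ((hkerc y).mul hgc.norm).integrableOn_Icc
  have hgInt : IntegrableOn (fun s => ‖g s‖) (Icc (-1:ℝ) 1) := hgc.norm.integrableOn_Icc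
  have hker_le_one : ∀ y s : ℝ, Real.exp (-(m * |y - s|)) ≤ 1 := by
    intro y s
    rw [Real.exp_le_one_iff]
    have : 0 ≤ m * |y - s| := mul_nonneg hm0.le (abs_nonneg _)
    linarith
  have hK1 : ∀ y : ℝ, K y ≤ nL1 w := by
    intro y
    rw [← hN1g]
    refine setIntegral_mono_on (hKint y) hgInt measurableSet_Icc fun s _ => ?_
    calc Real.exp (-(m * |y - s|)) * ‖g s‖ ≤ 1 * ‖g s‖ :=
          mul_le_mul_of_nonneg_right (hker_le_one y s) (norm_nonneg _)
      _ = ‖g s‖ := one_mul _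
  have hKnonneg : ∀ y : ℝ, 0 ≤ K y := fun y =>
    setIntegral_nonneg measurableSet_Icc fun s _ =>
      mul_nonneg (Real.exp_pos _).le (norm_nonneg _)
  -- kernel square integral bound
  have hker2 : ∀ y ∈ Icc (-1:ℝ) 1, (∫ s in Icc (-1:ℝ) 1, Real.exp (-(m * |y - s|)) ^ 2) ≤ 1/m := by
    intro y hy
    have hc2 : ∀ z : ℝ, Continuous (fun s : ℝ => Real.exp (-(m * |z - s|)) ^ 2) := fun z =>
      ((hkerc z).pow 2)
    rw [integral_Icc_eq_integral_Ioc,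
      ← intervalIntegral.integral_of_le (show (-1:ℝ) ≤ 1 by norm_num)]
    have hsplit : (∫ s in (-1:ℝ)..y, Real.exp (-(m * |y - s|)) ^ 2)
        + (∫ s in y..(1:ℝ), Real.exp (-(m * |y - s|)) ^ 2)
        = ∫ s in (-1:ℝ)..(1:ℝ), Real.exp (-(m * |y - s|)) ^ 2 :=
      intervalIntegral.integral_add_adjacent_intervals
        ((hc2 y).intervalIntegrable _ _) ((hc2 y).intervalIntegrable _ _)
    rw [← hsplit]
    have hright : (∫ s in y..(1:ℝ), Real.exp (-(m * |y - s|)) ^ 2) ≤ 1/(2*m) := by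
      have hcong : (∫ s in y..(1:ℝ), Real.exp (-(m * |y - s|)) ^ 2)
          = ∫ s in y..(1:ℝ), Real.exp (-(2*m*(s-y))) := by
        refine intervalIntegral.integral_congr fun s hs => ?_
        rw [uIcc_of_le hy.2] at hs
        have : |y - s| = s - y := by
          rw [abs_of_nonpos (by linarith [hs.1])]; ring
        rw [this, sq, ← Real.exp_add]; ring_nf
      rw [hcong]
      have hAnti : ∀ s : ℝ, HasDerivAt (fun t : ℝ => -(Real.exp (-(2*m*(t-y)))/(2*m)))
          (Real.exp (-(2*m*(s-y)))) s := by
        intro s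
        have h1 : HasDerivAt (fun s : ℝ => -(2*m*(s-y))) (-(2*m)) s := by
          simpa using (((hasDerivAt_id s).sub_const y).const_mul (-(2*m)))
        have h3 := (h1.exp.div_const (2*m)).neg
        have he : -(Real.exp (-(2*m*(s-y))) * -(2*m) / (2*m)) = Real.exp (-(2*m*(s-y))) := by
          field_simp
        rw [← he]
        exact h3
      have hftc := intervalIntegral.integral_eq_sub_of_hasDerivAt (a := y) (b := 1)
        (fun s _ => hAnti s)
        ((Real.continuous_exp.comp
          ((continuous_const.mul (continuous_id.sub continuous_const)).neg)).intervalIntegrable _ _)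
      rw [hftc]
      have h1 : 0 < Real.exp (-(2*m*(1-y))) := Real.exp_pos _
      have h2 : Real.exp (-(2*m*(y-y))) = 1 := by norm_num
      rw [h2]
      have hd : 0 ≤ Real.exp (-(2*m*(1-y)))/(2*m) := div_nonneg h1.le (by positivity)
      have hsplit2 : -(Real.exp (-(2*m*(1-y))))/(2*m) = -(Real.exp (-(2*m*(1-y)))/(2*m)) := by ring
      linarith [hsplit2]
    have hleft : (∫ s in (-1:ℝ)..y, Real.exp (-(m * |y - s|)) ^ 2) ≤ 1/(2*m) := by
      have hcong : (∫ s in (-1:ℝ)..y, Real.exp (-(m * |y - s|)) ^ 2)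
          = ∫ s in (-1:ℝ)..y, Real.exp (-(2*m*(y-s))) := by
        refine intervalIntegral.integral_congr fun s hs => ?_
        rw [uIcc_of_le hy.1] at hs
        have : |y - s| = y - s := abs_of_nonneg (by linarith [hs.2])
        rw [this, sq, ← Real.exp_add]; ring_nf
      rw [hcong]
      have hAnti : ∀ s : ℝ, HasDerivAt (fun t : ℝ => Real.exp (-(2*m*(y-t)))/(2*m))
          (Real.exp (-(2*m*(y-s)))) s := by
        intro s
        have h1 : HasDerivAt (fun s : ℝ => -(2*m*(y-s))) (2*m) s := by
          have h0 : HasDerivAt (fun s : ℝ => 2*m*s) (2*m) s := by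
            simpa using (hasDerivAt_id s).const_mul (2*m)
          have h' := h0.add_const (-(2*m*y))
          rw [show (fun s : ℝ => -(2*m*(y-s))) = fun x => 2*m*x + -(2*m*y) from funext fun t => by ring]
          exact h'
        have h3 := h1.exp.div_const (2*m)
        have he : Real.exp (-(2*m*(y-s))) * (2*m) / (2*m) = Real.exp (-(2*m*(y-s))) := by
          field_simp
        rw [← he]
        exact h3
      have hftc := intervalIntegral.integral_eq_sub_of_hasDerivAt (a := (-1:ℝ)) (b := y)
        (fun s _ => hAnti s)
        ((Real.continuous_exp.comp
          ((continuous_const.mul (continuous_const.sub continuous_id)).neg)).intervalIntegrable _ _)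
      rw [hftc]
      have h1 : 0 < Real.exp (-(2*m*(y-(-1)))) := Real.exp_pos _
      have h2 : Real.exp (-(2*m*(y-y))) = 1 := by norm_num
      rw [h2]
      have hd : 0 ≤ Real.exp (-(2*m*(y-(-1))))/(2*m) := div_nonneg h1.le (by positivity)
      linarith
    have : 1/(2*m) + 1/(2*m) = 1/m := by
      field_simp
      norm_num
    linarith
  -- Cauchy-Schwarz bound on K
  haveI hfin : IsFiniteMeasure (volume.restrict (Icc (-1:ℝ) 1)) := by
    constructor
    rw [Measure.restrict_apply_univ, Real.volume_Icc]
    exact ENNReal.ofReal_lt_top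
  have hK2 : ∀ y ∈ Icc (-1:ℝ) 1, K y ≤ (1/m) ^ ((1:ℝ)/2) * nL2 w := by
    intro y hy
    obtain ⟨Mg, hMg⟩ := isCompact_Icc.exists_bound_of_continuousOn hgc.continuousOn
    have hpq : Real.HolderConjugate 2 2 := Real.HolderConjugate.two_two
    have hf1 : MemLp (fun s => Real.exp (-(m * |y - s|))) (ENNReal.ofReal 2)
        (volume.restrict (Icc (-1:ℝ) 1)) := by
      refine MemLp.of_bound (hkerc y).aestronglyMeasurable 1 ?_
      refine Filter.Eventually.of_forall fun s => ?_
      rw [Real.norm_eq_abs, abs_of_pos (Real.exp_pos _)]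
      exact hker_le_one y s
    have hf2 : MemLp (fun s => ‖g s‖) (ENNReal.ofReal 2) (volume.restrict (Icc (-1:ℝ) 1)) := by
      refine MemLp.of_bound hgc.norm.aestronglyMeasurable.restrict Mg ?_
      refine (ae_restrict_iff' measurableSet_Icc).2 (Filter.Eventually.of_forall fun s hs => ?_)
      rw [norm_norm]
      exact hMg s hs
    have hcs := integral_mul_le_Lp_mul_Lq_of_nonneg hpq
      (Filter.Eventually.of_forall fun s => (Real.exp_pos _).le)
      (Filter.Eventually.of_forall fun s => norm_nonneg _) hf1 hf2
    have hrw : ∀ h : ℝ → ℝ, (∫ s in Icc (-1:ℝ) 1, h s ^ (2:ℝ)) = ∫ s in Icc (-1:ℝ) 1, h s ^ 2 := by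
      intro h
      refine setIntegral_congr_fun measurableSet_Icc fun s _ => ?_
      rw [Real.rpow_two]
    rw [hrw, hrw] at hcs
    calc K y ≤ (∫ s in Icc (-1:ℝ) 1, Real.exp (-(m * |y - s|)) ^ 2) ^ ((1:ℝ)/2)
          * (∫ s in Icc (-1:ℝ) 1, ‖g s‖ ^ 2) ^ ((1:ℝ)/2) := by
          have h12 : (1:ℝ)/2 = 1/(2:ℝ) := by norm_num
          rw [hK_def]
          simpa using hcs
      _ ≤ (1/m) ^ ((1:ℝ)/2) * nL2 w := by
          rw [hN2sq]
          unfold nL2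
          refine mul_le_mul_of_nonneg_right ?_ (Real.rpow_nonneg hN2sqnonneg _)
          exact Real.rpow_le_rpow
            (setIntegral_nonneg measurableSet_Icc fun s _ => sq_nonneg _)
            (hker2 y hy) (by norm_num)
  -- integrating factor representations
  set u : ℝ → ℂ := fun t => deriv φ t + ((m:ℝ):ℂ) * φ t with hu_def
  set v : ℝ → ℂ := fun t => deriv φ t - ((m:ℝ):ℂ) * φ t with hv_def
  have hnexp : ∀ (a t : ℝ), ‖Complex.exp ((((a:ℝ)):ℂ) * (t:ℂ))‖ = Real.exp (a*t) := by
    intro a t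
    rw [show (((a:ℝ)):ℂ) * (t:ℂ) = ((a*t : ℝ):ℂ) by push_cast; ring, norm_cexp_real]
  have hcexpc : ∀ a : ℝ, Continuous (fun s : ℝ => Complex.exp ((((a:ℝ)):ℂ) * (s:ℂ))) := fun a =>
    Complex.continuous_exp.comp (continuous_const.mul Complex.continuous_ofReal)
  have huder : ∀ t : ℝ, HasDerivAt u (deriv (deriv φ) t + ((m:ℝ):ℂ) * deriv φ t) t := fun t =>
    ((hφd t).hasDerivAt).add (((hφ1 t).hasDerivAt).const_mul _)
  have hvder : ∀ t : ℝ, HasDerivAt v (deriv (deriv φ) t - ((m:ℝ):ℂ) * deriv φ t) t := fun t =>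
    ((hφd t).hasDerivAt).sub (((hφ1 t).hasDerivAt).const_mul _)
  have hFder : ∀ t : ℝ,
      HasDerivAt (fun t : ℝ => Complex.exp ((((-m:ℝ)):ℂ) * (t:ℝ)) * u t)
        (Complex.exp ((((-m:ℝ)):ℂ) * (t:ℂ)) * g t) t := by
    intro t
    have h := (cexp_hasDerivAt ((((-m:ℝ)):ℂ)) t).mul (huder t)
    refine h.congr_deriv ?_
    simp only [hg_def, hu_def]
    rw [hk2]
    push_cast
    ring
  have hGder : ∀ t : ℝ,
      HasDerivAt (fun t : ℝ => Complex.exp ((((m:ℝ)):ℂ) * (t:ℝ)) * v t)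
        (Complex.exp ((((m:ℝ)):ℂ) * (t:ℂ)) * g t) t := by
    intro t
    have h := (cexp_hasDerivAt ((((m:ℝ)):ℂ)) t).mul (hvder t)
    refine h.congr_deriv ?_
    simp only [hg_def, hv_def]
    rw [hk2]
    push_cast
    ring
  have hFeq : ∀ a b : ℝ, (∫ s in a..b, Complex.exp ((((-m:ℝ)):ℂ) * (s:ℂ)) * g s)
      = Complex.exp ((((-m:ℝ)):ℂ) * (b:ℂ)) * u b - Complex.exp ((((-m:ℝ)):ℂ) * (a:ℂ)) * u a := by
    intro a b
    exact intervalIntegral.integral_eq_sub_of_hasDerivAt (fun t _ => hFder t)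
      (((hcexpc (-m)).mul hgc).intervalIntegrable _ _)
  have hGeq : ∀ a b : ℝ, (∫ s in a..b, Complex.exp ((((m:ℝ)):ℂ) * (s:ℂ)) * g s)
      = Complex.exp ((((m:ℝ)):ℂ) * (b:ℂ)) * v b - Complex.exp ((((m:ℝ)):ℂ) * (a:ℂ)) * v a := by
    intro a b
    exact intervalIntegral.integral_eq_sub_of_hasDerivAt (fun t _ => hGder t)
      (((hcexpc m).mul hgc).intervalIntegrable _ _)
  -- norm bound for the tail integrals
  have htail1 : ∀ y ∈ Icc (-1:ℝ) 1,
      Real.exp (m*y) * ‖∫ s in y..(1:ℝ), Complex.exp ((((-m:ℝ)):ℂ) * (s:ℂ)) * g s‖ ≤ K y := by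
    intro y hy
    have h1 : ‖∫ s in y..(1:ℝ), Complex.exp ((((-m:ℝ)):ℂ) * (s:ℂ)) * g s‖
        ≤ ∫ s in y..(1:ℝ), Real.exp (-m*s) * ‖g s‖ := by
      refine le_trans (intervalIntegral.norm_integral_le_integral_norm hy.2) ?_
      refine le_of_eq (intervalIntegral.integral_congr fun s _ => ?_)
      rw [norm_mul, hnexp]
    have h2 : Real.exp (m*y) * ∫ s in y..(1:ℝ), Real.exp (-m*s) * ‖g s‖
        = ∫ s in y..(1:ℝ), Real.exp (-(m * |y - s|)) * ‖g s‖ := by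
      rw [← intervalIntegral.integral_const_mul]
      refine intervalIntegral.integral_congr fun s hs => ?_
      rw [uIcc_of_le hy.2] at hs
      rw [← mul_assoc, ← Real.exp_add]
      congr 2
      rw [abs_of_nonpos (by linarith [hs.1] : y - s ≤ 0)]
      ring
    have h3 : (∫ s in y..(1:ℝ), Real.exp (-(m * |y - s|)) * ‖g s‖) ≤ K y := by
      rw [intervalIntegral.integral_of_le hy.2, hK_def]
      refine setIntegral_mono_set (hKint y)
        (Filter.Eventually.of_forall fun s => mul_nonneg (Real.exp_pos _).le (norm_nonneg _)) ?_
      refine HasSubset.Subset.eventuallyLE fun s hs => ?_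
      exact ⟨le_trans hy.1 hs.1.le, hs.2⟩
    calc Real.exp (m*y) * ‖∫ s in y..(1:ℝ), Complex.exp ((((-m:ℝ)):ℂ) * (s:ℂ)) * g s‖
        ≤ Real.exp (m*y) * ∫ s in y..(1:ℝ), Real.exp (-m*s) * ‖g s‖ :=
          mul_le_mul_of_nonneg_left h1 (Real.exp_pos _).le
      _ = ∫ s in y..(1:ℝ), Real.exp (-(m * |y - s|)) * ‖g s‖ := h2
      _ ≤ K y := h3
  have htail2 : ∀ y ∈ Icc (-1:ℝ) 1,
      Real.exp (-m*y) * ‖∫ s in (-1:ℝ)..y, Complex.exp ((((m:ℝ)):ℂ) * (s:ℂ)) * g s‖ ≤ K y := by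
    intro y hy
    have h1 : ‖∫ s in (-1:ℝ)..y, Complex.exp ((((m:ℝ)):ℂ) * (s:ℂ)) * g s‖
        ≤ ∫ s in (-1:ℝ)..y, Real.exp (m*s) * ‖g s‖ := by
      refine le_trans (intervalIntegral.norm_integral_le_integral_norm hy.1) ?_
      refine le_of_eq (intervalIntegral.integral_congr fun s _ => ?_)
      rw [norm_mul, hnexp]
    have h2 : Real.exp (-m*y) * ∫ s in (-1:ℝ)..y, Real.exp (m*s) * ‖g s‖
        = ∫ s in (-1:ℝ)..y, Real.exp (-(m * |y - s|)) * ‖g s‖ := by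
      rw [← intervalIntegral.integral_const_mul]
      refine intervalIntegral.integral_congr fun s hs => ?_
      rw [uIcc_of_le hy.1] at hs
      rw [← mul_assoc, ← Real.exp_add]
      congr 2
      rw [abs_of_nonneg (by linarith [hs.2] : 0 ≤ y - s)]
      ring
    have h3 : (∫ s in (-1:ℝ)..y, Real.exp (-(m * |y - s|)) * ‖g s‖) ≤ K y := by
      rw [intervalIntegral.integral_of_le hy.1, hK_def]
      refine setIntegral_mono_set (hKint y)
        (Filter.Eventually.of_forall fun s => mul_nonneg (Real.exp_pos _).le (norm_nonneg _)) ?_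
      refine HasSubset.Subset.eventuallyLE fun s hs => ?_
      exact ⟨hs.1.le, le_trans hs.2 hy.2⟩
    calc Real.exp (-m*y) * ‖∫ s in (-1:ℝ)..y, Complex.exp ((((m:ℝ)):ℂ) * (s:ℂ)) * g s‖
        ≤ Real.exp (-m*y) * ∫ s in (-1:ℝ)..y, Real.exp (m*s) * ‖g s‖ :=
          mul_le_mul_of_nonneg_left h1 (Real.exp_pos _).le
      _ = ∫ s in (-1:ℝ)..y, Real.exp (-(m * |y - s|)) * ‖g s‖ := h2
      _ ≤ K y := h3
  -- pointwise bounds on u and v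
  have hu_bound : ∀ y ∈ Icc (-1:ℝ) 1,
      ‖u y‖ ≤ Real.exp (m*(y-1)) * ‖u 1‖ + K y := by
    intro y hy
    have h1 := hFeq y 1
    have key : u y = Complex.exp ((((m:ℝ)):ℂ) * (y:ℂ)) *
        (Complex.exp ((((-m:ℝ)):ℂ) * ((1:ℝ):ℂ)) * u 1
          - ∫ s in y..(1:ℝ), Complex.exp ((((-m:ℝ)):ℂ) * (s:ℂ)) * g s) := by
      rw [h1]
      have : Complex.exp ((((m:ℝ)):ℂ) * (y:ℂ)) * Complex.exp ((((-m:ℝ)):ℂ) * (y:ℂ)) = 1 := by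
        rw [← Complex.exp_add, show (((m:ℝ)):ℂ) * (y:ℂ) + (((-m:ℝ)):ℂ) * (y:ℂ) = 0 by push_cast; ring,
          Complex.exp_zero]
      calc u y = (Complex.exp ((((m:ℝ)):ℂ) * (y:ℂ)) * Complex.exp ((((-m:ℝ)):ℂ) * (y:ℂ))) * u y := by
            rw [this, one_mul]
        _ = _ := by ring
    rw [key, mul_sub]
    refine le_trans (norm_sub_le _ _) ?_
    gcongr
    · rw [← mul_assoc, ← Complex.exp_add,
        show (((m:ℝ)):ℂ) * (y:ℂ) + (((-m:ℝ)):ℂ) * ((1:ℝ):ℂ) = (((m*(y-1):ℝ)):ℂ) by push_cast; ring,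
        norm_mul, norm_cexp_real]
    · rw [norm_mul, hnexp]
      exact htail1 y hy
  have hv_bound : ∀ y ∈ Icc (-1:ℝ) 1,
      ‖v y‖ ≤ Real.exp (-(m*(y+1))) * ‖v (-1)‖ + K y := by
    intro y hy
    have h1 := hGeq (-1) y
    have key : v y = Complex.exp ((((-m:ℝ)):ℂ) * (y:ℂ)) *
        (Complex.exp ((((m:ℝ)):ℂ) * ((-1:ℝ):ℂ)) * v (-1)
          + ∫ s in (-1:ℝ)..y, Complex.exp ((((m:ℝ)):ℂ) * (s:ℂ)) * g s) := by
      have h1' : (∫ s in (-1:ℝ)..y, Complex.exp ((((m:ℝ)):ℂ) * (s:ℂ)) * g s)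
          + Complex.exp ((((m:ℝ)):ℂ) * ((-1:ℝ):ℂ)) * v (-1)
          = Complex.exp ((((m:ℝ)):ℂ) * (y:ℂ)) * v y := by
        rw [h1]; push_cast; ring
      have hone : Complex.exp ((((-m:ℝ)):ℂ) * (y:ℂ)) * Complex.exp ((((m:ℝ)):ℂ) * (y:ℂ)) = 1 := by
        rw [← Complex.exp_add, show (((-m:ℝ)):ℂ) * (y:ℂ) + (((m:ℝ)):ℂ) * (y:ℂ) = 0 by push_cast; ring,
          Complex.exp_zero]
      calc v y = (Complex.exp ((((-m:ℝ)):ℂ) * (y:ℂ)) * Complex.exp ((((m:ℝ)):ℂ) * (y:ℂ))) * v y := by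
            rw [hone, one_mul]
        _ = Complex.exp ((((-m:ℝ)):ℂ) * (y:ℂ)) * (Complex.exp ((((m:ℝ)):ℂ) * (y:ℂ)) * v y) := by ring
        _ = _ := by rw [← h1']; ring
    rw [key, mul_add]
    refine le_trans (norm_add_le _ _) ?_
    gcongr
    · rw [← mul_assoc, ← Complex.exp_add,
        show (((-m:ℝ)):ℂ) * (y:ℂ) + (((m:ℝ)):ℂ) * ((-1:ℝ):ℂ) = (((-(m*(y+1)):ℝ)):ℂ) by push_cast; ring,
        norm_mul, norm_cexp_real]
    · rw [norm_mul,
        show ((((-m:ℝ)):ℂ) * (y:ℂ)) = ((((-m):ℝ):ℂ) * ((y:ℝ):ℂ)) by push_cast; ring, hnexp]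
      exact htail2 y hy
  -- boundary values
  have hu1 : u 1 = deriv φ 1 := by simp [hu_def, hb1]
  have hvm1 : v (-1) = deriv φ (-1) := by simp [hv_def, hb0]
  have hv1 : v 1 = deriv φ 1 := by simp [hv_def, hb1]
  have hum1 : u (-1) = deriv φ (-1) := by simp [hu_def, hb0]
  have hexp2 : Real.exp (-(2*m)) ≤ 1/2 := by
    have hE : (3:ℝ) ≤ Real.exp (2*m) := by nlinarith [Real.add_one_le_exp (2*m)]
    have hEpos : (0:ℝ) < Real.exp (2*m) := Real.exp_pos _
    rw [Real.exp_neg]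
    rw [inv_le_comm₀ hEpos (by norm_num)]
    linarith
  have hm1mem : (-1:ℝ) ∈ Icc (-1:ℝ) 1 := by norm_num
  have h1mem : (1:ℝ) ∈ Icc (-1:ℝ) 1 := by norm_num
  have master : ∀ B : ℝ, (∀ y ∈ Icc (-1:ℝ) 1, K y ≤ B) →
      ∀ y ∈ Icc (-1:ℝ) 1, ‖deriv φ y‖ ≤ 3*B ∧ m * ‖φ y‖ ≤ 3*B := by
    intro B hB
    have hp0 : (0:ℝ) ≤ ‖deriv φ (-1)‖ := norm_nonneg _
    have hp1 : (0:ℝ) ≤ ‖deriv φ 1‖ := norm_nonneg _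
    have hBnn : 0 ≤ B := le_trans (hKnonneg 1) (hB 1 h1mem)
    have e1 : ‖deriv φ 1‖ ≤ Real.exp (-(2*m)) * ‖deriv φ (-1)‖ + B := by
      have h := hv_bound 1 h1mem
      rw [hv1, hvm1, show -(m*((1:ℝ)+1)) = -(2*m) by ring] at h
      linarith [hB 1 h1mem]
    have e0 : ‖deriv φ (-1)‖ ≤ Real.exp (-(2*m)) * ‖deriv φ 1‖ + B := by
      have h := hu_bound (-1) hm1mem
      rw [hum1, hu1, show m*((-1:ℝ)-1) = -(2*m) by ring] at h
      linarith [hB (-1) hm1mem]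
    have hsum : ‖deriv φ (-1)‖ + ‖deriv φ 1‖ ≤ 4*B := by
      have hmul0 : Real.exp (-(2*m)) * ‖deriv φ (-1)‖ ≤ (1/2) * ‖deriv φ (-1)‖ :=
        mul_le_mul_of_nonneg_right hexp2 hp0
      have hmul1 : Real.exp (-(2*m)) * ‖deriv φ 1‖ ≤ (1/2) * ‖deriv φ 1‖ :=
        mul_le_mul_of_nonneg_right hexp2 hp1
      linarith
    intro y hy
    have hKB := hB y hy
    have hu' : ‖u y‖ ≤ ‖deriv φ 1‖ + B := by
      have h := hu_bound y hy
      rw [hu1] at h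
      have hle1 : Real.exp (m*(y-1)) ≤ 1 := by
        rw [Real.exp_le_one_iff]
        nlinarith [hy.2, hm0]
      have := mul_le_of_le_one_left hp1 hle1
      linarith
    have hv' : ‖v y‖ ≤ ‖deriv φ (-1)‖ + B := by
      have h := hv_bound y hy
      rw [hvm1] at h
      have hle1 : Real.exp (-(m*(y+1))) ≤ 1 := by
        rw [Real.exp_le_one_iff]
        nlinarith [hy.1, hm0]
      have := mul_le_of_le_one_left hp0 hle1
      linarith
    constructor
    · have hrepr : deriv φ y = (u y + v y) / 2 := by
        simp only [hu_def, hv_def]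
        ring
      rw [hrepr]
      have : ‖(u y + v y)/2‖ ≤ (‖u y‖ + ‖v y‖)/2 := by
        rw [norm_div]
        have h2 : ‖(2:ℂ)‖ = 2 := by norm_num
        rw [h2]
        gcongr
        exact norm_add_le _ _
      linarith
    · have hrepr : ((m:ℝ):ℂ) * φ y = (u y - v y) / 2 := by
        simp only [hu_def, hv_def]
        ring
      have hmn : m * ‖φ y‖ = ‖((m:ℝ):ℂ) * φ y‖ := by
        rw [norm_mul, Complex.norm_real, Real.norm_eq_abs, abs_of_pos hm0]
      rw [hmn, hrepr]
      have : ‖(u y - v y)/2‖ ≤ (‖u y‖ + ‖v y‖)/2 := by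
        rw [norm_div]
        have h2 : ‖(2:ℂ)‖ = 2 := by norm_num
        rw [h2]
        gcongr
        exact norm_sub_le _ _
      linarith
  -- sup bounds
  haveI : Nonempty ↥(Icc (-1:ℝ) 1) := ⟨⟨0, by norm_num⟩⟩
  have hsup : ∀ (f : ℝ → ℂ) (M : ℝ), (∀ y ∈ Icc (-1:ℝ) 1, ‖f y‖ ≤ M) → nLinf f ≤ M := by
    intro f M h
    exact ciSup_le fun y => h y y.2
  have final : ∀ B : ℝ, (∀ y ∈ Icc (-1:ℝ) 1, K y ≤ B) →
      nLinf (deriv φ) + m * nLinf φ ≤ 6*B := by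
    intro B hB
    have hmast := master B hB
    have h1 : nLinf (deriv φ) ≤ 3*B := hsup _ _ fun y hy => (hmast y hy).1
    have h2 : nLinf φ ≤ 3*B/m := by
      refine hsup _ _ fun y hy => ?_
      rw [le_div_iff₀ hm0]
      have := (hmast y hy).2
      linarith [this]
    have h3 : m * nLinf φ ≤ 3*B := by
      have := mul_le_mul_of_nonneg_left h2 hm0.le
      rw [mul_div_assoc] at this
      calc m * nLinf φ ≤ m * (3*B/m) := mul_le_mul_of_nonneg_left h2 hm0.le
        _ = 3*B := by field_simp
    linarith
  -- conclusion (ii)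
  have conc2 : nLinf (deriv φ) + m * nLinf φ ≤ 100 * nL1 w := by
    have := final (nL1 w) fun y _ => hK1 y
    linarith
  -- conclusion (iii)
  have conc3 : nLinf (deriv φ) + m * nLinf φ ≤ 100 * m ^ (-(1:ℝ)/2) * nL2 w := by
    have h := final ((1/m) ^ ((1:ℝ)/2) * nL2 w) fun y hy => hK2 y hy
    have hrpow : (1/m) ^ ((1:ℝ)/2) = m ^ (-(1:ℝ)/2) := by
      rw [one_div, Real.inv_rpow hm0.le, ← Real.rpow_neg hm0.le, neg_div]
    rw [hrpow] at h
    have hx : 0 ≤ m ^ (-(1:ℝ)/2) * nL2 w :=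
      mul_nonneg (Real.rpow_nonneg hm0.le _) hN2nonneg
    calc nLinf (deriv φ) + m * nLinf φ ≤ 6 * (m ^ (-(1:ℝ)/2) * nL2 w) := h
      _ ≤ 100 * (m ^ (-(1:ℝ)/2) * nL2 w) := by linarith
      _ = 100 * m ^ (-(1:ℝ)/2) * nL2 w := by ring
  -- the identity (i)
  have hconjφc : Continuous fun t => (starRingEnd ℂ) (φ t) := Complex.continuous_conj.comp hφc
  have hconjφdc : Continuous fun t => (starRingEnd ℂ) (deriv φ t) :=
    Complex.continuous_conj.comp hφdc
  have hΦder : ∀ t : ℝ, HasDerivAt (fun t => deriv φ t * (starRingEnd ℂ) (φ t))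
      (deriv (deriv φ) t * (starRingEnd ℂ) (φ t)
        + deriv φ t * (starRingEnd ℂ) (deriv φ t)) t := by
    intro t
    have h1 := ((hφd t).hasDerivAt).mul ((hφ1 t).hasDerivAt.star)
    exact h1
  have hibp : (∫ t in (-1:ℝ)..1, (deriv (deriv φ) t * (starRingEnd ℂ) (φ t)
      + deriv φ t * (starRingEnd ℂ) (deriv φ t))) = 0 := by
    rw [intervalIntegral.integral_eq_sub_of_hasDerivAt (fun t _ => hΦder t)
      (((hφdd.mul hconjφc).add (hφdc.mul hconjφdc)).intervalIntegrable _ _)]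
    simp [hb0, hb1]
  have hsq1 : (nL2 (deriv φ))^2 = ∫ t in (-1:ℝ)..1, ‖deriv φ t‖^2 := by
    unfold nL2
    rw [sq_rpow_half (setIntegral_nonneg measurableSet_Icc fun t _ => sq_nonneg _)]
    rw [integral_Icc_eq_integral_Ioc, intervalIntegral.integral_of_le (by norm_num : (-1:ℝ) ≤ 1)]
  have hsq2 : (nL2 φ)^2 = ∫ t in (-1:ℝ)..1, ‖φ t‖^2 := by
    unfold nL2
    rw [sq_rpow_half (setIntegral_nonneg measurableSet_Icc fun t _ => sq_nonneg _)]
    rw [integral_Icc_eq_integral_Ioc, intervalIntegral.integral_of_le (by norm_num : (-1:ℝ) ≤ 1)]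
  have hid : (((nL2 (deriv φ))^2 + (k:ℝ)^2 * (nL2 φ)^2 : ℝ) : ℂ) = innI (fun y => -w y) φ := by
    have hrhs : innI (fun y => -w y) φ
        = ∫ t in (-1:ℝ)..1, -g t * (starRingEnd ℂ) (φ t) := by
      unfold innI
      have h1 : (∫ y in Icc (-1:ℝ) 1, -w y * (starRingEnd ℂ) (φ y))
          = ∫ y in Icc (-1:ℝ) 1, -g y * (starRingEnd ℂ) (φ y) := by
        refine setIntegral_congr_fun measurableSet_Icc fun t ht => ?_
        rw [hgw t ht]
      rw [h1, integral_Icc_eq_integral_Ioc,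
        ← intervalIntegral.integral_of_le (by norm_num : (-1:ℝ) ≤ 1)]
    rw [hrhs]
    have hint1 : IntervalIntegrable (fun t => deriv φ t * (starRingEnd ℂ) (deriv φ t)
        + (k:ℂ)^2 * (φ t * (starRingEnd ℂ) (φ t))) MeasureTheory.volume (-1:ℝ) 1 :=
      ((hφdc.mul hconjφdc).add (continuous_const.mul (hφc.mul hconjφc))).intervalIntegrable _ _
    have hint2 : IntervalIntegrable (fun t => deriv (deriv φ) t * (starRingEnd ℂ) (φ t)
        + deriv φ t * (starRingEnd ℂ) (deriv φ t)) MeasureTheory.volume (-1:ℝ) 1 :=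
      ((hφdd.mul hconjφc).add (hφdc.mul hconjφdc)).intervalIntegrable _ _
    have hint3 : IntervalIntegrable (fun t => deriv φ t * (starRingEnd ℂ) (deriv φ t))
        MeasureTheory.volume (-1:ℝ) 1 := (hφdc.mul hconjφdc).intervalIntegrable _ _
    have hint4 : IntervalIntegrable (fun t => φ t * (starRingEnd ℂ) (φ t))
        MeasureTheory.volume (-1:ℝ) 1 := (hφc.mul hconjφc).intervalIntegrable _ _
    have hsplit : (∫ t in (-1:ℝ)..1, -g t * (starRingEnd ℂ) (φ t))
        = ∫ t in (-1:ℝ)..1, ((deriv φ t * (starRingEnd ℂ) (deriv φ t)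
            + (k:ℂ)^2 * (φ t * (starRingEnd ℂ) (φ t)))
          - (deriv (deriv φ) t * (starRingEnd ℂ) (φ t)
            + deriv φ t * (starRingEnd ℂ) (deriv φ t))) := by
      refine intervalIntegral.integral_congr fun t _ => ?_
      simp only [hg_def]
      ring
    rw [hsplit, intervalIntegral.integral_sub hint1 hint2, hibp, sub_zero,
      intervalIntegral.integral_add hint3 (hint4.const_mul _),
      intervalIntegral.integral_const_mul]
    have hterm1 : (∫ t in (-1:ℝ)..1, deriv φ t * (starRingEnd ℂ) (deriv φ t))
        = (((∫ t in (-1:ℝ)..1, ‖deriv φ t‖^2 : ℝ)) : ℂ) := by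
      rw [← intervalIntegral.integral_ofReal]
      refine intervalIntegral.integral_congr fun t _ => ?_
      rw [Complex.mul_conj, Complex.normSq_eq_norm_sq]
    have hterm2 : (∫ t in (-1:ℝ)..1, φ t * (starRingEnd ℂ) (φ t))
        = (((∫ t in (-1:ℝ)..1, ‖φ t‖^2 : ℝ)) : ℂ) := by
      rw [← intervalIntegral.integral_ofReal]
      refine intervalIntegral.integral_congr fun t _ => ?_
      rw [Complex.mul_conj, Complex.normSq_eq_norm_sq]
    rw [hterm1, hterm2, hsq1, hsq2]
    push_cast
    ring
  -- conclusion (i) inequality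
  have hEnn : 0 ≤ (nL2 (deriv φ))^2 + (k:ℝ)^2 * (nL2 φ)^2 := by positivity
  have hphi_pt : ∀ y ∈ Icc (-1:ℝ) 1, ‖φ y‖ ≤ 3 * nL1 w / m := by
    intro y hy
    rw [le_div_iff₀ hm0]
    have := (master (nL1 w) (fun y _ => hK1 y) y hy).2
    linarith
  have conc1 : (nL2 (deriv φ))^2 + (k:ℝ)^2 * (nL2 φ)^2 ≤ 100 * m⁻¹ * (nL1 w)^2 := by
    have hEnorm : (nL2 (deriv φ))^2 + (k:ℝ)^2 * (nL2 φ)^2 = ‖innI (fun y => -w y) φ‖ := by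
      rw [← hid, Complex.norm_real, Real.norm_eq_abs, abs_of_nonneg hEnn]
    rw [hEnorm]
    unfold innI
    refine le_trans (norm_integral_le_integral_norm _) ?_
    have hc1 : (∫ y in Icc (-1:ℝ) 1, ‖-w y * (starRingEnd ℂ) (φ y)‖)
        = ∫ y in Icc (-1:ℝ) 1, ‖w y‖ * ‖φ y‖ := by
      refine setIntegral_congr_fun measurableSet_Icc fun y _ => ?_
      rw [norm_mul, norm_neg, RCLike.norm_conj]
    have hint5 : IntegrableOn (fun y => ‖w y‖ * ‖φ y‖) (Icc (-1:ℝ) 1) :=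
      (hw.norm.mul hφc.continuousOn.norm).integrableOn_compact isCompact_Icc
    have hint6 : IntegrableOn (fun y => ‖w y‖ * (3 * nL1 w / m)) (Icc (-1:ℝ) 1) :=
      (hw.norm.mul continuousOn_const).integrableOn_compact isCompact_Icc
    calc (∫ y in Icc (-1:ℝ) 1, ‖-w y * (starRingEnd ℂ) (φ y)‖)
        = ∫ y in Icc (-1:ℝ) 1, ‖w y‖ * ‖φ y‖ := hc1
      _ ≤ ∫ y in Icc (-1:ℝ) 1, ‖w y‖ * (3 * nL1 w / m) := by
          refine setIntegral_mono_on hint5 hint6 measurableSet_Icc fun y hy => ?_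
          exact mul_le_mul_of_nonneg_left (hphi_pt y hy) (norm_nonneg _)
      _ = nL1 w * (3 * nL1 w / m) := by
          rw [integral_mul_const]
          unfold nL1
          ring
      _ ≤ 100 * m⁻¹ * (nL1 w)^2 := by
          have heq : nL1 w * (3 * nL1 w / m) = 3 * m⁻¹ * (nL1 w)^2 := by
            rw [div_eq_mul_inv]
            ring
          rw [heq]
          have h97 : 0 ≤ (100 - 3 : ℝ) * m⁻¹ * (nL1 w)^2 := by positivity
          linarith
  exact ⟨hid, conc1, conc2, conc3⟩
end
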